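/- If G is complementary vanishing and has no dominating vertex, then the disjoint union G ⊔ K_1 is β-robust; in particular G ⊔ K_1 is complementary vanishing. -/
import Mathlib


/-- `A ∈ S(G)`: real symmetric matrix whose off-diagonal nonzero pattern is `E(G)`. -/
def MatIn {V : Type*} [Fintype V] (G : SimpleGraph V) (A : Matrix V V ℝ) : Prop :=
  A.IsSymm ∧ ∀ i j : V, i ≠ j → (A i j ≠ 0 ↔ G.Adj i j)

/-- `G` is complementary vanishing. -/
def CompVan {V : Type*} [Fintype V] (G : SimpleGraph V) : Prop :=
  ∃ A B : Matrix V V ℝ, MatIn G A ∧ MatIn Gᶜ B ∧ A * B = 0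

/-- `G` is α-robust. -/
def AlphaRobust {V : Type*} [Fintype V] (G : SimpleGraph V) : Prop :=
  ∃ A B : Matrix V V ℝ, MatIn G A ∧ MatIn Gᶜ B ∧ A * B = 0 ∧
    ∃ x : V → ℝ, A.mulVec x = 0 ∧ ∀ i, x i ≠ 0

/-- `G` is β-robust. -/
def BetaRobust {V : Type*} [Fintype V] (G : SimpleGraph V) : Prop :=
  ∃ A B : Matrix V V ℝ, MatIn G A ∧ MatIn Gᶜ B ∧ A * B = 0 ∧
    ∃ x : V → ℝ, B.mulVec x = 0 ∧ ∀ i, x i ≠ 0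

/-- A generic vector avoiding finitely many hyperplanes: if every row of `B` is nonzero,
there is `w` with all entries nonzero and all entries of `B *ᵥ w` nonzero. -/
lemma exists_good_vec {n : ℕ} (B : Matrix (Fin n) (Fin n) ℝ)
    (hrow : ∀ i : Fin n, ∃ j, B i j ≠ 0) :
    ∃ w : Fin n → ℝ, (∀ i, w i ≠ 0) ∧ ∀ i, B.mulVec w i ≠ 0 := by
  classical
  by_contra hc
  push_neg at hc
  set p : Fin n ⊕ Fin n → Subspace ℝ (Fin n → ℝ) :=
    Sum.elim (fun i => LinearMap.ker ((LinearMap.proj i : (Fin n → ℝ) →ₗ[ℝ] ℝ)))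
      (fun i => LinearMap.ker ((LinearMap.proj i : (Fin n → ℝ) →ₗ[ℝ] ℝ).comp B.mulVecLin))
    with hp
  have hcov : ⋃ i, (p i : Set (Fin n → ℝ)) = Set.univ := by
    ext w
    simp only [Set.mem_iUnion, Set.mem_univ, iff_true]
    by_cases hw : ∀ i, w i ≠ 0
    · obtain ⟨i, hi⟩ := hc w hw
      exact ⟨Sum.inr i, by simpa [hp, LinearMap.mem_ker] using hi⟩
    · push_neg at hw
      obtain ⟨i, hi⟩ := hw
      exact ⟨Sum.inl i, by simpa [hp, LinearMap.mem_ker] using hi⟩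
  obtain ⟨i, hi⟩ := Subspace.exists_eq_top_of_iUnion_eq_univ hcov
  cases i with
  | inl i =>
    have h1 : (Pi.single i (1:ℝ)) ∈ p (Sum.inl i) := hi ▸ Submodule.mem_top
    simp [hp, LinearMap.mem_ker] at h1
  | inr i =>
    obtain ⟨j, hj⟩ := hrow i
    have h1 : (Pi.single j (1:ℝ)) ∈ p (Sum.inr i) := hi ▸ Submodule.mem_top
    simp [hp, LinearMap.mem_ker, Matrix.mulVec_single] at h1
    exact hj h1

theorem stmt_16 {n : ℕ} (G : SimpleGraph (Fin n)) (h : CompVan G)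
    (hdom : ¬ ∃ v : Fin n, ∀ u, u ≠ v → G.Adj v u) :
    BetaRobust (G ⊕g (⊥ : SimpleGraph (Fin 1))) ∧
    CompVan (G ⊕g (⊥ : SimpleGraph (Fin 1))) := by
  classical
  obtain ⟨A, B, hA, hB, hAB⟩ := h
  push_neg at hdom
  have hrow : ∀ i : Fin n, ∃ j, B i j ≠ 0 := by
    intro i
    obtain ⟨u, hu, hadj⟩ := hdom i
    refine ⟨u, (hB.2 i u (Ne.symm hu)).mpr ?_⟩
    exact ⟨Ne.symm hu, hadj⟩
  obtain ⟨w, hw, hBw⟩ := exists_good_vec B hrow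
  set b : Fin n → ℝ := B.mulVec w with hbdef
  have hAb : A.mulVec b = 0 := by
    rw [hbdef, Matrix.mulVec_mulVec, hAB, Matrix.zero_mulVec]
  set A' : Matrix (Fin n ⊕ Fin 1) (Fin n ⊕ Fin 1) ℝ := Matrix.fromBlocks A 0 0 0 with hA'def
  set B' : Matrix (Fin n ⊕ Fin 1) (Fin n ⊕ Fin 1) ℝ :=
    Matrix.fromBlocks B (Matrix.of fun i _ => b i) (Matrix.of fun _ j => b j)
      (Matrix.of fun _ _ => dotProduct b w) with hB'def
  have hA' : MatIn (G ⊕g (⊥ : SimpleGraph (Fin 1))) A' := by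
    constructor
    · unfold Matrix.IsSymm
      rw [hA'def, Matrix.fromBlocks_transpose]
      simp [hA.1.eq]
    · rintro (i | i) (j | j) hne
      · have : i ≠ j := fun hij => hne (by rw [hij])
        simpa [hA'def, SimpleGraph.sum_adj] using hA.2 i j this
      · simp [hA'def, SimpleGraph.sum_adj]
      · simp [hA'def, SimpleGraph.sum_adj]
      · exact absurd (by rw [Subsingleton.elim i j]) hne
  have hB' : MatIn (G ⊕g (⊥ : SimpleGraph (Fin 1)))ᶜ B' := by
    constructor
    · unfold Matrix.IsSymm
      ext (i | i) (j | j) <;>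
        simp [hB'def, Matrix.transpose_apply, hB.1.apply]
    · rintro (i | i) (j | j) hne
      · have hij : i ≠ j := fun hij => hne (by rw [hij])
        have := hB.2 i j hij
        simp only [SimpleGraph.compl_adj] at this ⊢
        simpa [hB'def, SimpleGraph.sum_adj, hij] using this
      · simp [hB'def, SimpleGraph.compl_adj, SimpleGraph.sum_adj, hBw i]
      · simp [hB'def, SimpleGraph.compl_adj, SimpleGraph.sum_adj, hBw j]
      · exact absurd (by rw [Subsingleton.elim i j]) hne
  have hmul : A' * B' = 0 := by
    rw [hA'def, hB'def, Matrix.fromBlocks_multiply]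
    have h1 : A * Matrix.of (fun i (_ : Fin 1) => b i) = 0 := by
      ext i j
      have := congrFun hAb i
      simpa [Matrix.mul_apply, Matrix.mulVec, dotProduct] using this
    simp [hAB, h1, Matrix.fromBlocks_zero]
  have hker : ∃ x : Fin n ⊕ Fin 1 → ℝ, B'.mulVec x = 0 ∧ ∀ i, x i ≠ 0 := by
    refine ⟨Sum.elim (fun i => -w i) (fun _ => 1), ?_, ?_⟩
    · ext (i | i)
      · have := congrFun hbdef i
        simp only [Matrix.mulVec, dotProduct] at this
        simp [hB'def, Matrix.mulVec, dotProduct, Fintype.sum_sum_type, mul_comm]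
        rw [this]; ring
      · simp [hB'def, Matrix.mulVec, dotProduct, Fintype.sum_sum_type]
    · rintro (i | i)
      · simpa using hw i
      · simp
  exact ⟨⟨A', B', hA', hB', hmul, hker⟩, ⟨A', B', hA', hB', hmul⟩⟩
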